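/- For r = 1, p ≥ 1 and n ≥ 1, the minimum degree of IΓ_n^{(p,1)} equals ⌈n/(2p+1)⌉. -/

import Mathlib

/-- Hamming distance between two binary words (as lists). -/
def hdist (u v : List Bool) : ℕ := (List.zipWith bne u v).count true

/-- `w` is an I-Fibonacci (p,r)-code: no factor `1^(r+1)` and no factor `1 0^s 1` with `s < p`
(equivalently: maximal blocks of 1s have length ≤ r and blocks of 1s are separated by ≥ p zeros). -/
def ICode (p r : ℕ) (w : List Bool) : Prop :=
  ¬ (List.replicate (r + 1) true <:+: w) ∧
  ∀ s < p, ¬ ((true :: (List.replicate s false ++ [true])) <:+: w)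

/-- `w` is an O-Fibonacci (p,r)-code: no factor `(10^(p-1))^r 1` and no factor `1 0^s 1`
with `s ≤ p - 2`. -/
def OCode (p r : ℕ) (w : List Bool) : Prop :=
  ¬ (((List.replicate r (true :: List.replicate (p - 1) false)).flatten ++ [true]) <:+: w) ∧
  ∀ s, s + 2 ≤ p → ¬ ((true :: (List.replicate s false ++ [true])) <:+: w)

/-- Vertex type of the I-Fibonacci (p,r)-cube of dimension n. -/
def IVert (p r n : ℕ) := {w : List Bool // w.length = n ∧ ICode p r w}

/-- Vertex type of the O-Fibonacci (p,r)-cube of dimension n. -/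
def OVert (p r n : ℕ) := {w : List Bool // w.length = n ∧ OCode p r w}

/-- The I-Fibonacci (p,r)-cube: vertices adjacent iff they differ in exactly one coordinate. -/
def IGraph (p r n : ℕ) : SimpleGraph (IVert p r n) :=
  SimpleGraph.fromRel (fun u v => hdist u.1 v.1 = 1)

/-- The O-Fibonacci (p,r)-cube. -/
def OGraph (p r n : ℕ) : SimpleGraph (OVert p r n) :=
  SimpleGraph.fromRel (fun u v => hdist u.1 v.1 = 1)

/-- Eccentricity of a vertex. -/
noncomputable def ecc {V : Type*} (G : SimpleGraph V) (v : V) : ℕ :=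
  sSup {d | ∃ u, G.dist v u = d}

/-- Radius of a graph. -/
noncomputable def grad {V : Type*} (G : SimpleGraph V) : ℕ :=
  sInf {e | ∃ v, ecc G v = e}

/-- Diameter of a graph. -/
noncomputable def gdiam {V : Type*} (G : SimpleGraph V) : ℕ :=
  sSup {d | ∃ u v, G.dist u v = d}

/-- Degree of a vertex (number of neighbours). -/
noncomputable def deg {V : Type*} (G : SimpleGraph V) (v : V) : ℕ :=
  {u | G.Adj v u}.ncard

def bit (w : List Bool) (i : ℕ) : Bool := (w[i]?).getD false

lemma bit_lt {w : List Bool} {i : ℕ} (h : bit w i = true) : i < w.length := by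
  by_contra hc
  simp [bit, List.getElem?_eq_none (not_lt.mp hc)] at h

lemma getElem?_eq_bit {w : List Bool} {j : ℕ} (hj : j < w.length) : w[j]? = some (bit w j) := by
  simp [bit, List.getElem?_eq_getElem hj]

def flp (w : List Bool) (i : ℕ) : List Bool := w.set i (!(bit w i))

lemma length_flp (w : List Bool) (i : ℕ) : (flp w i).length = w.length := by
  simp [flp]

lemma bit_flp (w : List Bool) (i j : ℕ) :
    bit (flp w i) j = if j = i ∧ i < w.length then !(bit w i) else bit w j := by
  simp only [bit, flp, List.getElem?_set]
  by_cases h : i = j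
  · subst h
    by_cases h2 : i < w.length
    · simp [h2]
    · simp [h2, List.getElem?_eq_none (not_lt.mp h2)]
  · rw [if_neg h, if_neg (fun hh => h hh.1.symm)]

lemma getmid (l m r : List Bool) (j : ℕ) (hj : j < m.length) :
    (l ++ (m ++ r))[l.length + j]? = m[j]? := by
  rw [List.getElem?_append_right (by omega)]
  rw [Nat.add_sub_cancel_left]
  exact List.getElem?_append_left hj

def Good (p : ℕ) (w : List Bool) : Prop :=
  ∀ i d : ℕ, 0 < d → d ≤ p → ¬(bit w i = true ∧ bit w (i + d) = true)

-- pattern lemmas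
lemma pat_len (s : ℕ) : (true :: (List.replicate s false ++ [true])).length = s + 2 := by simp

lemma pat_zero (s : ℕ) : (true :: (List.replicate s false ++ [true]))[0]? = some true :=
  List.getElem?_cons_zero

lemma pat_last (s : ℕ) : (true :: (List.replicate s false ++ [true]))[s + 1]? = some true := by
  rw [List.getElem?_cons_succ]
  have : (List.replicate s false ++ [true])[(List.replicate s false).length]? = some true :=
    List.getElem?_concat_length
  simpa using this

lemma pat_mid (s j : ℕ) (h0 : 0 < j) (hs : j ≤ s) :
    (true :: (List.replicate s false ++ [true]))[j]? = some false := by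
  rw [show j = (j - 1) + 1 by omega, List.getElem?_cons_succ,
    List.getElem?_append_left (by rw [List.length_replicate]; omega),
    List.getElem?_replicate, if_pos (by omega)]

lemma infix_bits {w : List Bool} {s : ℕ}
    (h : (true :: (List.replicate s false ++ [true])) <:+: w) :
    ∃ i, bit w i = true ∧ bit w (i + s + 1) = true := by
  obtain ⟨l, r, hw⟩ := h
  rw [List.append_assoc] at hw
  refine ⟨l.length, ?_, ?_⟩
  · have h2 := getmid l (true :: (List.replicate s false ++ [true])) r 0 (by rw [pat_len]; omega)
    rw [pat_zero, hw, Nat.add_zero] at h2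
    simp [bit, h2]
  · have h2 := getmid l (true :: (List.replicate s false ++ [true])) r (s + 1) (by rw [pat_len]; omega)
    rw [pat_last, hw] at h2
    rw [Nat.add_assoc]
    simp [bit, h2]

lemma good_of_icode {p : ℕ} {w : List Bool} (h : ICode p 1 w) : Good p w := by
  intro i d hd hdp hbits
  obtain ⟨h1, h2⟩ := hbits
  induction d using Nat.strong_induction_on generalizing i with
  | _ d ih =>
    by_cases hmid : ∃ mm, 0 < mm ∧ mm < d ∧ bit w (i + mm) = true
    · obtain ⟨mm, hm0, hmd, hbm⟩ := hmid
      exact ih mm hmd i hm0 (by omega) h1 hbm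
    · push_neg at hmid
      apply h.2 (d - 1) (by omega)
      have hlen : i + d < w.length := bit_lt h2
      have hilen : i < w.length := bit_lt h1
      refine ⟨w.take i, w.drop (i + d + 1), ?_⟩
      rw [List.append_assoc]
      apply List.ext_getElem?
      intro j
      have hlt : (w.take i).length = i := by simp; omega
      rcases lt_trichotomy j i with hji | hji | hji
      · rw [List.getElem?_append_left (by omega)]
        simp [List.getElem?_take, hji]
      · rw [hji]
        have hmidg := getmid (w.take i) (true :: (List.replicate (d-1) false ++ [true]))
          (w.drop (i+d+1)) 0 (by rw [pat_len]; omega)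
        simp only [hlt, Nat.add_zero, pat_zero] at hmidg
        rw [hmidg, getElem?_eq_bit hilen, h1]
      · rw [List.getElem?_append_right (by omega), hlt]
        by_cases hjd : j ≤ i + d
        · have hj2 : j - i < (true :: (List.replicate (d-1) false ++ [true])).length := by
            rw [pat_len]; omega
          rw [List.getElem?_append_left hj2]
          rcases Nat.eq_or_lt_of_le hjd with heq | hlt2
          · rw [show j - i = (d - 1) + 1 by omega, pat_last,
              getElem?_eq_bit (by omega : j < w.length), show j = i + d by omega, h2]
          · rw [pat_mid (d-1) (j-i) (by omega) (by omega),
              getElem?_eq_bit (by omega : j < w.length)]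
            have hmm := hmid (j - i) (by omega) (by omega)
            rw [show i + (j - i) = j by omega] at hmm
            simp only [Bool.not_eq_true] at hmm
            rw [hmm]
        · rw [List.getElem?_append_right (by rw [pat_len]; omega), List.getElem?_drop, pat_len]
          congr 1
          omega

lemma icode_of_good {p : ℕ} (hp : 1 ≤ p) {w : List Bool} (h : Good p w) : ICode p 1 w := by
  constructor
  · intro hinf
    have : (true :: (List.replicate 0 false ++ [true])) <:+: w := by simpa using hinf
    obtain ⟨i, hi1, hi2⟩ := infix_bits this
    exact h i 1 one_pos hp ⟨hi1, by simpa using hi2⟩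
  · intro s hs hinf
    obtain ⟨i, hi1, hi2⟩ := infix_bits hinf
    exact h i (s + 1) (by omega) (by omega) ⟨hi1, by rw [← Nat.add_assoc]; exact hi2⟩



lemma hdist_cons (a b : Bool) (u v : List Bool) :
    hdist (a :: u) (b :: v) = (if a = b then 0 else 1) + hdist u v := by
  simp only [hdist, List.zipWith_cons_cons, List.count_cons]
  rcases a <;> rcases b <;> simp [Nat.add_comm]

lemma hdist_comm (u v : List Bool) : hdist u v = hdist v u := by
  induction u generalizing v with
  | nil => cases v <;> rfl
  | cons a u ih =>
    cases v with
    | nil => rfl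
    | cons b v => rw [hdist_cons, hdist_cons, ih]; congr 1; rcases a <;> rcases b <;> simp

lemma hdist_self (u : List Bool) : hdist u u = 0 := by
  induction u with
  | nil => rfl
  | cons a u ih => rw [hdist_cons, ih]; simp

lemma hdist_eq_zero {u v : List Bool} (hl : u.length = v.length) (h : hdist u v = 0) : u = v := by
  induction u generalizing v with
  | nil => cases v with | nil => rfl | cons b v => simp at hl
  | cons a u ih =>
    cases v with
    | nil => simp at hl
    | cons b v =>
      rw [hdist_cons] at h
      by_cases hab : a = b
      · rw [hab]; rw [ih (by simpa using hl) (by simpa [hab] using h)]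
      · simp [hab] at h

lemma hdist_flp {w : List Bool} {i : ℕ} (hi : i < w.length) : hdist w (flp w i) = 1 := by
  induction w generalizing i with
  | nil => simp at hi
  | cons a u ih =>
    cases i with
    | zero =>
      have : flp (a :: u) 0 = (!a) :: u := by simp [flp, bit]
      rw [this, hdist_cons, hdist_self]
      rcases a <;> simp
    | succ i =>
      have : flp (a :: u) (i + 1) = a :: flp u i := by simp [flp, bit]
      rw [this, hdist_cons, ih (by simpa using hi)]
      simp

lemma eq_flp_of_hdist_one {u v : List Bool} (hl : u.length = v.length) (h : hdist u v = 1) :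
    ∃ i < u.length, v = flp u i := by
  induction u generalizing v with
  | nil => cases v with | nil => simp [hdist] at h | cons b v => simp at hl
  | cons a u ih =>
    cases v with
    | nil => simp at hl
    | cons b v =>
      rw [hdist_cons] at h
      by_cases hab : a = b
      · rw [if_pos hab, Nat.zero_add] at h
        obtain ⟨i, hilt, hv⟩ := ih (by simpa using hl) h
        refine ⟨i + 1, by simpa using hilt, ?_⟩
        rw [hab]
        simp [flp, bit, hv]
      · rw [if_neg hab] at h
        have h0 : hdist u v = 0 := by omega
        have := hdist_eq_zero (by simpa using hl) h0
        refine ⟨0, Nat.succ_pos _, ?_⟩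
        have : b = !a := by rcases a <;> rcases b <;> simp_all
        simp [flp, bit, this, ← hdist_eq_zero (by simpa using hl) h0]

open Classical in
lemma deg_formula (p n : ℕ) (hp : 1 ≤ p) (v : IVert p 1 n) :
    deg (IGraph p 1 n) v =
      ((Finset.range n).filter (fun i => Good p (flp v.1 i))).card := by
  classical
  obtain ⟨w, hlen, hcode⟩ := v
  set v : IVert p 1 n := ⟨w, hlen, hcode⟩ with hv
  set F : Finset ℕ := (Finset.range n).filter (fun i => Good p (flp w i)) with hF
  have hmem : ∀ i, i ∈ F ↔ i < n ∧ Good p (flp w i) := by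
    intro i; simp [hF]
  set g : ℕ → IVert p 1 n := fun i =>
    if h : i < n ∧ Good p (flp w i) then
      ⟨flp w i, by rw [length_flp, hlen], icode_of_good hp h.2⟩ else v with hg
  have himg : {u | (IGraph p 1 n).Adj v u} = g '' ↑F := by
    ext u
    simp only [Set.mem_setOf_eq, Set.mem_image, Finset.mem_coe]
    constructor
    · intro hadj
      rw [IGraph, SimpleGraph.fromRel_adj] at hadj
      obtain ⟨hne, hd⟩ := hadj
      have hd1 : hdist w u.1 = 1 := by
        rcases hd with h | h
        · exact h
        · rw [hdist_comm]; exact h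
      obtain ⟨i, hilt, hui⟩ := eq_flp_of_hdist_one (by rw [hlen, u.2.1]) hd1
      rw [hlen] at hilt
      have hgood : Good p (flp w i) := by
        rw [← hui]; exact good_of_icode u.2.2
      refine ⟨i, (hmem i).2 ⟨hilt, hgood⟩, ?_⟩
      rw [hg]
      simp only [hilt, hgood, and_self, ↓reduceDIte]
      exact Subtype.ext hui.symm
    · rintro ⟨i, hi, rfl⟩
      obtain ⟨hilt, hgood⟩ := (hmem i).1 hi
      rw [IGraph, SimpleGraph.fromRel_adj]
      rw [hg]
      simp only [hilt, hgood, and_self, ↓reduceDIte]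
      constructor
      · intro heq
        have : w = flp w i := congrArg Subtype.val heq
        have hb := bit_flp w i i
        rw [if_pos ⟨rfl, by omega⟩] at hb
        rw [← this] at hb
        rcases hbw : bit w i <;> simp [hbw] at hb
      · left
        exact hdist_flp (w := w) (i := i) (by omega)
  rw [deg, himg, Set.ncard_image_of_injOn, Set.ncard_coe_finset]
  · intro i hi j hj hij
    rw [Finset.mem_coe, hmem] at hi hj
    rw [hg] at hij
    simp only [hi.1, hi.2, hj.1, hj.2, and_self, ↓reduceDIte] at hij
    have hval : flp w i = flp w j := congrArg Subtype.val hij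
    by_contra hne
    have h1 := bit_flp w i i
    rw [if_pos ⟨rfl, by omega⟩] at h1
    have h2 := bit_flp w j i
    rw [if_neg (by tauto)] at h2
    rw [hval, h2] at h1
    rcases hbw : bit w i <;> simp [hbw] at h1

lemma flp_good_iff {p : ℕ} {w : List Bool} (hw : Good p w) {i : ℕ} (hi : i < w.length) :
    Good p (flp w i) ↔
      (bit w i = true ∨ ∀ j, j ≤ i + p → i ≤ j + p → bit w j = false) := by
  have hbf : ∀ j, bit (flp w i) j = if j = i then !(bit w i) else bit w j := by
    intro j
    rw [bit_flp, ]
    by_cases h : j = i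
    · rw [if_pos ⟨h, hi⟩, if_pos h]
    · rw [if_neg (by tauto), if_neg h]
  by_cases hb : bit w i = true
  · constructor
    · intro _; left; exact hb
    · intro _
      intro a d hd hdp ⟨ha1, ha2⟩
      have k1 : bit w a = true := by
        have := hbf a; rw [ha1] at this
        by_cases h : a = i
        · rw [h]; exact hb
        · rw [if_neg h] at this; exact this.symm
      have k2 : bit w (a + d) = true := by
        have := hbf (a + d); rw [ha2] at this
        by_cases h : a + d = i
        · rw [h]; exact hb
        · rw [if_neg h] at this; exact this.symm
      exact hw a d hd hdp ⟨k1, k2⟩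
  · have hbi : bit w i = false := by rcases h : bit w i; rfl; exact absurd h hb
    constructor
    · intro hg
      right
      intro j hj1 hj2
      by_cases hji : j = i
      · rw [hji]; exact hbi
      · by_contra hbj
        have hbj' : bit w j = true := by rcases h : bit w j; exact absurd h hbj; rfl
        have hfi : bit (flp w i) i = true := by rw [hbf, if_pos rfl, hbi]; rfl
        have hfj : bit (flp w i) j = true := by rw [hbf, if_neg hji]; exact hbj'
        rcases lt_or_gt_of_ne hji with hlt | hlt
        · exact hg j (i - j) (by omega) (by omega) ⟨hfj, by rw [show j + (i - j) = i by omega]; exact hfi⟩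
        · exact hg i (j - i) (by omega) (by omega) ⟨hfi, by rw [show i + (j - i) = j by omega]; exact hfj⟩
    · rintro (h | hfree)
      · exact absurd h hb
      · intro a d hd hdp ⟨ha1, ha2⟩
        rw [hbf] at ha1 ha2
        by_cases h1 : a = i
        · rw [if_pos h1] at ha1
          by_cases h2 : a + d = i
          · omega
          · rw [if_neg h2] at ha2
            have := hfree (a + d) (by omega) (by omega)
            rw [this] at ha2; exact Bool.false_ne_true ha2
        · rw [if_neg h1] at ha1
          by_cases h2 : a + d = i
          · have := hfree a (by omega) (by omega)
            rw [this] at ha1; exact Bool.false_ne_true ha1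
          · rw [if_neg h2] at ha2
            exact hw a d hd hdp ⟨ha1, ha2⟩

open Finset Classical in
lemma lower_bound (p n : ℕ) (hp : 1 ≤ p) {w : List Bool} (hlen : w.length = n) (hw : Good p w) :
    n ≤ (2 * p + 1) * ((Finset.range n).filter (fun i => Good p (flp w i))).card := by
  classical
  set F := (Finset.range n).filter (fun i => Good p (flp w i)) with hF
  set O := (Finset.range n).filter (fun i => bit w i = true) with hO
  set FR := (Finset.range n).filter
    (fun i => ∀ j, j ≤ i + p → i ≤ j + p → bit w j = false) with hFR
  have hOF : O ⊆ F := by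
    intro i hi
    simp only [hO, mem_filter, mem_range] at hi
    simp only [hF, mem_filter, mem_range]
    exact ⟨hi.1, (flp_good_iff hw (by omega)).2 (Or.inl hi.2)⟩
  have hFRF : FR ⊆ F := by
    intro i hi
    simp only [hFR, mem_filter, mem_range] at hi
    simp only [hF, mem_filter, mem_range]
    exact ⟨hi.1, (flp_good_iff hw (by omega)).2 (Or.inr hi.2)⟩
  have hdisj : Disjoint O FR := by
    rw [Finset.disjoint_left]
    intro i hiO hiFR
    simp only [hO, mem_filter] at hiO
    simp only [hFR, mem_filter] at hiFR
    have := hiFR.2 i (by omega) (by omega)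
    rw [hiO.2] at this; simp at this
  have hcover : Finset.range n ⊆ FR ∪ O.biUnion (fun j => Finset.Icc (j - p) (j + p)) := by
    intro i hi
    rw [mem_union]
    by_cases hfree : ∀ j, j ≤ i + p → i ≤ j + p → bit w j = false
    · left; simp only [hFR, mem_filter]; exact ⟨hi, hfree⟩
    · right
      push_neg at hfree
      obtain ⟨j, hj1, hj2, hbj⟩ := hfree
      have hbj' : bit w j = true := by rcases h : bit w j; exact absurd h hbj; rfl
      have hjn : j < n := by have := bit_lt hbj'; omega
      rw [mem_biUnion]
      refine ⟨j, by simp [hO, hjn, hbj'], ?_⟩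
      rw [Finset.mem_Icc]; omega
  have hcard : n ≤ FR.card + O.card * (2 * p + 1) := by
    have h1 := Finset.card_le_card hcover
    rw [Finset.card_range] at h1
    have h2 := Finset.card_union_le FR (O.biUnion (fun j => Finset.Icc (j - p) (j + p)))
    have h3 := Finset.card_biUnion_le (s := O) (t := fun j => Finset.Icc (j - p) (j + p))
    have h4 : ∑ j ∈ O, (Finset.Icc (j - p) (j + p)).card ≤ ∑ _j ∈ O, (2 * p + 1) :=
      Finset.sum_le_sum (fun j _ => by rw [Nat.card_Icc]; omega)
    rw [Finset.sum_const, smul_eq_mul] at h4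
    calc n ≤ _ := h1
      _ ≤ _ := h2
      _ ≤ FR.card + ∑ j ∈ O, (Finset.Icc (j - p) (j + p)).card := Nat.add_le_add_left h3 _
      _ ≤ FR.card + O.card * (2 * p + 1) := Nat.add_le_add_left h4 _
  have hsplit : F.card ≥ O.card + FR.card := by
    have : O ∪ FR ⊆ F := Finset.union_subset hOF hFRF
    have h5 := Finset.card_le_card this
    rw [Finset.card_union_of_disjoint hdisj] at h5
    exact h5
  calc n ≤ FR.card + O.card * (2 * p + 1) := hcard
    _ ≤ (2 * p + 1) * (O.card + FR.card) := by nlinarith [FR.card.zero_le, O.card.zero_le]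
    _ ≤ (2 * p + 1) * F.card := Nat.mul_le_mul_left _ hsplit

def KK (p n : ℕ) : ℕ := (n + 2*p) / (2*p+1)
def BB (p n : ℕ) : ℕ := (KK p n - 1) * (2*p+1)
def XL (p n : ℕ) : ℕ := max (n - 1 - p) (BB p n)
def ExSet (p n i : ℕ) : Prop := (i % (2*p+1) = p ∧ i < BB p n) ∨ i = XL p n
instance ExSet.dec (p n i : ℕ) : Decidable (ExSet p n i) := by unfold ExSet; infer_instance

def exW (p n : ℕ) : List Bool := List.ofFn (fun i : Fin n => decide (ExSet p n i.1))

lemma length_exW (p n : ℕ) : (exW p n).length = n := by simp [exW]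

lemma bit_exW (p n i : ℕ) : bit (exW p n) i = true ↔ (i < n ∧ ExSet p n i) := by
  rw [bit, exW, List.getElem?_ofFn]
  by_cases h : i < n
  · simp [h]
  · simp [h]

lemma arith_facts (p n : ℕ) (hp : 1 ≤ p) (hn : 1 ≤ n) :
    1 ≤ KK p n ∧ BB p n < n ∧ n ≤ BB p n + (2*p+1) ∧
      BB p n = (2*p+1) * (KK p n - 1) := by
  have hq : 0 < 2*p+1 := by omega
  have hk1 : 1 ≤ KK p n := (Nat.one_le_div_iff hq).2 (by omega)
  have hd := Nat.div_add_mod (n + 2*p) (2*p+1)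
  have hm : (n + 2*p) % (2*p+1) < 2*p+1 := Nat.mod_lt _ hq
  have hX : (2*p+1) * 1 ≤ (2*p+1) * KK p n := Nat.mul_le_mul_left _ hk1
  have hBB : BB p n = (2*p+1) * KK p n - (2*p+1) := by
    rw [BB, Nat.mul_comm, Nat.mul_sub, Nat.mul_one]
  rw [show (n + 2*p) / (2*p+1) = KK p n from rfl] at hd
  refine ⟨hk1, by omega, by omega, ?_⟩
  rw [hBB, Nat.mul_sub, Nat.mul_one]

lemma typeA_bound {p n i : ℕ} (hp : 1 ≤ p) (hn : 1 ≤ n) (h1 : i % (2*p+1) = p)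
    (h2 : i < BB p n) : (2*p+1) * (i / (2*p+1)) + p = i ∧ i / (2*p+1) < KK p n - 1 ∧
      (2*p+1) * (i / (2*p+1)) + (2*p+1) ≤ BB p n := by
  obtain ⟨hk1, hBn, hnB, hBe⟩ := arith_facts p n hp hn
  have hq : 0 < 2*p+1 := by omega
  have hdm := Nat.div_add_mod i (2*p+1)
  rw [h1] at hdm
  have hab : i / (2*p+1) < KK p n - 1 := by
    by_contra hc
    push_neg at hc
    have := Nat.mul_le_mul_left (2*p+1) hc
    omega
  have hsucc : (2*p+1) * (i / (2*p+1) + 1) ≤ (2*p+1) * (KK p n - 1) :=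
    Nat.mul_le_mul_left _ hab
  rw [Nat.mul_add, Nat.mul_one] at hsucc
  exact ⟨hdm, hab, by omega⟩

lemma good_exW (p n : ℕ) (hp : 1 ≤ p) (hn : 1 ≤ n) : Good p (exW p n) := by
  obtain ⟨hk1, hBn, hnB, hBe⟩ := arith_facts p n hp hn
  intro i d hd hdp ⟨h1, h2⟩
  rw [bit_exW] at h1 h2
  obtain ⟨hin, hex1⟩ := h1
  obtain ⟨hidn, hex2⟩ := h2
  have hXL : BB p n ≤ XL p n := le_max_right _ _
  rcases hex1 with ⟨hm1, hb1⟩ | hx1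
  · obtain ⟨he1, ha1, hs1⟩ := typeA_bound hp hn hm1 hb1
    rcases hex2 with ⟨hm2, hb2⟩ | hx2
    · obtain ⟨he2, ha2, hs2⟩ := typeA_bound hp hn hm2 hb2
      have hab : i / (2*p+1) < (i + d) / (2*p+1) := by
        by_contra hc
        push_neg at hc
        have := Nat.mul_le_mul_left (2*p+1) hc
        omega
      have := Nat.mul_le_mul_left (2*p+1) (Nat.succ_le_of_lt hab)
      rw [Nat.mul_succ] at this
      omega
    · -- i type A, i + d = XL ≥ BB, but i + d ≤ i + p ≤ BB - p - 1 + p < BB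
      omega
  · rcases hex2 with ⟨hm2, hb2⟩ | hx2
    · omega
    · omega

lemma cover_exW (p n : ℕ) (hp : 1 ≤ p) (hn : 1 ≤ n) :
    ∀ i < n, ∃ j, j ≤ i + p ∧ i ≤ j + p ∧ bit (exW p n) j = true := by
  obtain ⟨hk1, hBn, hnB, hBe⟩ := arith_facts p n hp hn
  intro i hin
  by_cases hiB : i < BB p n
  · refine ⟨(2*p+1) * (i / (2*p+1)) + p, ?_, ?_, ?_⟩
    · have hdm := Nat.div_add_mod i (2*p+1)
      have hm : i % (2*p+1) < 2*p+1 := Nat.mod_lt _ (by omega)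
      omega
    · have hdm := Nat.div_add_mod i (2*p+1)
      have hm : i % (2*p+1) < 2*p+1 := Nat.mod_lt _ (by omega)
      omega
    · rw [bit_exW]
      have hab : i / (2*p+1) < KK p n - 1 := by
        by_contra hc
        push_neg at hc
        have h := Nat.mul_le_mul_left (2*p+1) hc
        have hdm := Nat.div_add_mod i (2*p+1)
        have hm : i % (2*p+1) < 2*p+1 := Nat.mod_lt _ (by omega)
        omega
      have hsucc : (2*p+1) * (i / (2*p+1) + 1) ≤ (2*p+1) * (KK p n - 1) :=
        Nat.mul_le_mul_left _ hab
      rw [Nat.mul_add, Nat.mul_one] at hsucc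
      constructor
      · omega
      · left
        constructor
        · rw [Nat.mul_add_mod]
          exact Nat.mod_eq_of_lt (by omega)
        · omega
  · refine ⟨XL p n, ?_, ?_, ?_⟩
    · rw [XL]; omega
    · rw [XL]; omega
    · rw [bit_exW]
      refine ⟨?_, Or.inr rfl⟩
      rw [XL]; omega

open Classical in
lemma count_exW (p n : ℕ) (hp : 1 ≤ p) (hn : 1 ≤ n) :
    ((Finset.range n).filter (fun i => bit (exW p n) i = true)).card ≤ KK p n := by
  obtain ⟨hk1, hBn, hnB, hBe⟩ := arith_facts p n hp hn
  have hsub : (Finset.range n).filter (fun i => bit (exW p n) i = true) ⊆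
      (Finset.range (KK p n - 1)).image (fun a => (2*p+1) * a + p) ∪ {XL p n} := by
    intro i hi
    simp only [Finset.mem_filter, Finset.mem_range] at hi
    obtain ⟨hin, hbi⟩ := hi
    rw [bit_exW] at hbi
    rcases hbi.2 with ⟨hm, hb⟩ | hx
    · obtain ⟨he, ha, _⟩ := typeA_bound hp hn hm hb
      rw [Finset.mem_union, Finset.mem_image]
      exact Or.inl ⟨i / (2*p+1), Finset.mem_range.2 ha, he⟩
    · rw [Finset.mem_union, Finset.mem_singleton]
      exact Or.inr hx
  calc ((Finset.range n).filter (fun i => bit (exW p n) i = true)).card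
      ≤ _ := Finset.card_le_card hsub
    _ ≤ ((Finset.range (KK p n - 1)).image (fun a => (2*p+1) * a + p)).card + 1 := by
        have := Finset.card_union_le ((Finset.range (KK p n - 1)).image (fun a => (2*p+1) * a + p))
          ({XL p n} : Finset ℕ)
        simpa using this
    _ ≤ (KK p n - 1) + 1 := by
        have h1 := Finset.card_image_le (s := Finset.range (KK p n - 1))
          (f := fun a => (2*p+1) * a + p)
        rw [Finset.card_range] at h1
        omega
    _ = KK p n := by omega

open Classical in
/-- `δ(IΓ_n^{(p,1)}) = ⌈n/(2p+1)⌉`. -/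
theorem IGraph_min_degree_r_one (p n : ℕ) (hp : 1 ≤ p) (hn : 1 ≤ n) :
    (∀ v : IVert p 1 n, (n + 2 * p) / (2 * p + 1) ≤ deg (IGraph p 1 n) v) ∧
    (∃ v : IVert p 1 n, deg (IGraph p 1 n) v = (n + 2 * p) / (2 * p + 1)) := by
  have hq : 0 < 2 * p + 1 := by omega
  have lower : ∀ v : IVert p 1 n, (n + 2 * p) / (2 * p + 1) ≤ deg (IGraph p 1 n) v := by
    intro v
    rw [deg_formula p n hp v]
    have hlb := lower_bound p n hp v.2.1 (good_of_icode v.2.2)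
    rw [Nat.div_le_iff_le_mul_add_pred hq]
    omega
  refine ⟨lower, ?_⟩
  refine ⟨⟨exW p n, length_exW p n, icode_of_good hp (good_exW p n hp hn)⟩, ?_⟩
  set v : IVert p 1 n := ⟨exW p n, length_exW p n, icode_of_good hp (good_exW p n hp hn)⟩
  apply le_antisymm
  · rw [deg_formula p n hp v]
    have hsub : (Finset.range n).filter (fun i => Good p (flp (exW p n) i)) ⊆
        (Finset.range n).filter (fun i => bit (exW p n) i = true) := by
      intro i hi
      simp only [Finset.mem_filter, Finset.mem_range] at hi ⊢
      obtain ⟨hin, hgood⟩ := hi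
      refine ⟨hin, ?_⟩
      have hilen : i < (exW p n).length := by rw [length_exW]; exact hin
      rcases (flp_good_iff (good_exW p n hp hn) hilen).1 hgood with hb | hfree
      · exact hb
      · obtain ⟨j, hj1, hj2, hbj⟩ := cover_exW p n hp hn i hin
        have := hfree j hj1 hj2
        rw [this] at hbj
        exact absurd hbj (by simp)
    calc ((Finset.range n).filter (fun i => Good p (flp (exW p n) i))).card
        ≤ _ := Finset.card_le_card hsub
      _ ≤ KK p n := count_exW p n hp hn
      _ = (n + 2 * p) / (2 * p + 1) := rfl
  · exact lower v
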